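/- Let X be an integrable random variable with distribution function F and let p ∈ (0,1). Then AV@R_p(X) := (1/(1-p)) ∫_p^1 q_t⁻(F) dt equals min over u ∈ ℝ of { u + (1/(1-p)) E[(X-u)⁺] }, and the minimum is attained at u = q_p⁻(F). -/

import Mathlib

open MeasureTheory Set

open scoped Topology

/-- Rockafellar–Uryasev representation: for an integrable `X` and `p ∈ (0,1)`,
`AV@R_p(X) = (1/(1-p)) ∫_p^1 q_t⁻(F) dt` equals the minimum over `u` of
`u + (1/(1-p)) E[(X-u)⁺]`, attained at `u = q_p⁻(F)`. -/
theorem rockafellar_uryasev {Ω : Type*} [MeasurableSpace Ω]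
    (μ : Measure Ω) [IsProbabilityMeasure μ]
    (X : Ω → ℝ) (hX : Integrable X μ) (p : ℝ) (hp : p ∈ Ioo 0 1)
    (F : ℝ → ℝ) (hF : ∀ x, F x = (μ {ω | X ω ≤ x}).toReal)
    (q : ℝ → ℝ) (hq : ∀ t, q t = sInf {x | t ≤ F x})
    (g : ℝ → ℝ) (hg : ∀ u, g u = u + (1 / (1 - p)) * ∫ ω, max (X ω - u) 0 ∂μ) :
    (1 / (1 - p)) * (∫ t in Ioo p 1, q t) = g (q p) ∧ ∀ u : ℝ, g (q p) ≤ g u := by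
  obtain ⟨hp0, hp1⟩ := hp
  have h1p : (0:ℝ) < 1 - p := by linarith
  have hXm : AEMeasurable X μ := hX.aemeasurable
  set ν : Measure ℝ := μ.map X with hνdef
  have hνprob : IsProbabilityMeasure ν := Measure.isProbabilityMeasure_map hXm
  have hFc : ∀ x, F x = ProbabilityTheory.cdf ν x := by
    intro x
    rw [hF, ProbabilityTheory.cdf_eq_real, measureReal_def, hνdef,
      Measure.map_apply_of_aemeasurable hXm measurableSet_Iic]
    rfl
  have hFmono : Monotone F := by
    intro a b hab
    rw [hFc, hFc]
    exact ProbabilityTheory.monotone_cdf ν hab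
  have hF0 : ∀ x, 0 ≤ F x := fun x => by rw [hFc]; exact ProbabilityTheory.cdf_nonneg ν x
  have hF1 : ∀ x, F x ≤ 1 := fun x => by rw [hFc]; exact ProbabilityTheory.cdf_le_one ν x
  -- the level sets of F
  have hSne : ∀ t : ℝ, t < 1 → {x | t ≤ F x}.Nonempty := by
    intro t ht
    obtain ⟨x, hx⟩ := ((ProbabilityTheory.tendsto_cdf_atTop ν).eventually
      (eventually_ge_nhds ht)).exists
    exact ⟨x, by rw [mem_setOf_eq, hFc]; exact hx⟩
  have hSbdd : ∀ t : ℝ, 0 < t → BddBelow {x | t ≤ F x} := by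
    intro t ht
    obtain ⟨y, hy⟩ := ((ProbabilityTheory.tendsto_cdf_atBot ν).eventually
      (eventually_lt_nhds ht)).exists
    have hy' : F y < t := by rw [hFc]; exact hy
    refine ⟨y, fun z hz => ?_⟩
    by_contra hzy
    push_neg at hzy
    have hzFt : t ≤ F z := hz
    have : F z ≤ F y := hFmono hzy.le
    linarith
  -- Galois correspondence on (0,1)
  have keyA : ∀ t, 0 < t → t < 1 → ∀ x, (q t ≤ x ↔ t ≤ F x) := by
    intro t ht0 ht1 x
    constructor
    · intro h
      have hmem : t ≤ F (q t) := by
        have hrc : ContinuousWithinAt F (Ici (q t)) (q t) := by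
          have := (ProbabilityTheory.cdf ν).right_continuous (q t)
          exact this.congr (fun y _ => (hFc y)) (hFc (q t))
        have hrc' : Filter.Tendsto F (𝓝[>] (q t)) (𝓝 (F (q t))) :=
          hrc.tendsto.mono_left (nhdsWithin_mono _ Ioi_subset_Ici_self)
        refine ge_of_tendsto hrc' ?_
        filter_upwards [self_mem_nhdsWithin] with y hy
        obtain ⟨s, hs, hsy⟩ := exists_lt_of_csInf_lt (hSne t ht1) (by rw [← hq]; exact hy)
        exact le_trans hs (hFmono hsy.le)
      exact hmem.trans (hFmono h)
    · intro h
      rw [hq]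
      exact csInf_le (hSbdd t ht0) h
  -- monotonicity of q on (0,1]
  have hqmono : ∀ t s, 0 < t → t ≤ s → s < 1 → q t ≤ q s := by
    intro t s ht hts hs1
    rw [hq, hq]
    exact csInf_le_csInf (hSbdd t ht) (hSne s hs1) (fun x hx => le_trans hts hx)
  -- values of q outside (0,1]
  have hqle0 : ∀ t : ℝ, t ≤ 0 → q t = 0 := by
    intro t ht
    rw [hq]
    have : {x | t ≤ F x} = univ := eq_univ_of_forall (fun x => ht.trans (hF0 x))
    rw [this]
    refine Real.sInf_of_not_bddBelow ?_
    rintro ⟨y, hy⟩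
    have := hy (mem_univ (y - 1))
    linarith
  have hqgt1 : ∀ t : ℝ, 1 < t → q t = 0 := by
    intro t ht
    rw [hq]
    have : {x | t ≤ F x} = ∅ := by
      ext x
      simp only [mem_setOf_eq, mem_empty_iff_false, iff_false, not_le]
      exact (hF1 x).trans_lt ht
    rw [this, Real.sInf_empty]
  -- measurability of q
  have hqmeas : Measurable q := by
    apply measurable_of_Iic
    intro x
    have hA : MeasurableSet {t : ℝ | (t ≤ 0 ∨ 1 < t) ∧ (0:ℝ) ≤ x} := by
      by_cases hx0 : (0:ℝ) ≤ x
      · simp only [hx0, and_true]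
        exact measurableSet_Iic.union measurableSet_Ioi
      · simp only [hx0, and_false, setOf_false]
        exact MeasurableSet.empty
    have hB : MeasurableSet {t : ℝ | t = 1 ∧ q 1 ≤ x} := by
      by_cases hx1 : q 1 ≤ x
      · simp only [hx1, and_true, setOf_eq_eq_singleton]
        exact measurableSet_singleton 1
      · simp only [hx1, and_false, setOf_false]
        exact MeasurableSet.empty
    have hset : q ⁻¹' Iic x = (Ioo 0 1 ∩ Iic (F x)) ∪ {t : ℝ | (t ≤ 0 ∨ 1 < t) ∧ (0:ℝ) ≤ x}
        ∪ {t : ℝ | t = 1 ∧ q 1 ≤ x} := by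
      ext t
      simp only [mem_preimage, mem_Iic, mem_union, mem_inter_iff, mem_Ioo, mem_setOf_eq]
      constructor
      · intro h
        rcases le_or_gt t 0 with h0 | h0
        · exact Or.inl (Or.inr ⟨Or.inl h0, by rwa [hqle0 t h0] at h⟩)
        · rcases lt_trichotomy t 1 with h1 | h1 | h1
          · exact Or.inl (Or.inl ⟨⟨h0, h1⟩, (keyA t h0 h1 x).1 h⟩)
          · exact Or.inr ⟨h1, h1 ▸ h⟩
          · exact Or.inl (Or.inr ⟨Or.inr h1, by rwa [hqgt1 t h1] at h⟩)
      · rintro ((⟨⟨h0, h1⟩, hx⟩ | ⟨h01, hx⟩) | ⟨h1, hx⟩)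
        · exact (keyA t h0 h1 x).2 hx
        · rcases h01 with h | h
          · rw [hqle0 t h]; exact hx
          · rw [hqgt1 t h]; exact hx
        · rw [h1]; exact hx
    rw [hset]
    exact ((measurableSet_Ioo.inter measurableSet_Iic).union hA).union hB
  -- the uniform measure on (0,1)
  set m : Measure ℝ := volume.restrict (Ioo 0 1) with hmdef
  have hmprob : IsProbabilityMeasure m := by
    constructor
    rw [hmdef, Measure.restrict_apply_univ, Real.volume_Ioo]
    norm_num
  -- pushforward identity: m.map q = ν
  have hmap : m.map q = ν := by
    have hmapprob : IsProbabilityMeasure (m.map q) :=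
      Measure.isProbabilityMeasure_map hqmeas.aemeasurable
    refine Measure.ext_of_Iic _ _ (fun x => ?_)
    rw [Measure.map_apply hqmeas measurableSet_Iic, hmdef,
      Measure.restrict_apply (hqmeas measurableSet_Iic)]
    have h1 : q ⁻¹' Iic x ∩ Ioo 0 1 = Ioo 0 1 ∩ Iic (F x) := by
      ext t
      simp only [mem_inter_iff, mem_preimage, mem_Iic, mem_Ioo]
      constructor
      · rintro ⟨h, ht⟩
        exact ⟨ht, (keyA t ht.1 ht.2 x).1 h⟩
      · rintro ⟨ht, h⟩
        exact ⟨(keyA t ht.1 ht.2 x).2 h, ht⟩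
    have hν : ν (Iic x) = ENNReal.ofReal (F x) := by
      rw [hFc]
      exact (ProbabilityTheory.ofReal_cdf ν x).symm
    rw [h1, hν]
    rcases lt_or_eq_of_le (hF1 x) with h | h
    · have : Ioo (0:ℝ) 1 ∩ Iic (F x) = Ioc 0 (F x) := by
        ext t
        simp only [mem_inter_iff, mem_Ioo, mem_Iic, mem_Ioc]
        constructor
        · rintro ⟨⟨h0, _⟩, hFx⟩; exact ⟨h0, hFx⟩
        · rintro ⟨h0, hFx⟩; exact ⟨⟨h0, hFx.trans_lt h⟩, hFx⟩
      rw [this, Real.volume_Ioc, sub_zero]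
    · have : Ioo (0:ℝ) 1 ∩ Iic (F x) = Ioo 0 1 := by
        rw [inter_eq_left]
        intro t ht
        rw [mem_Iic, h]
        exact ht.2.le
      rw [this, Real.volume_Ioo, ← h]
      norm_num
  -- change of variables
  have hint : ∀ u : ℝ, ∫ ω, max (X ω - u) 0 ∂μ = ∫ t in Ioo 0 1, max (q t - u) 0 := by
    intro u
    have hc : Continuous (fun x : ℝ => max (x - u) 0) :=
      (continuous_id.sub continuous_const).max continuous_const
    calc ∫ ω, max (X ω - u) 0 ∂μ = ∫ x, max (x - u) 0 ∂ν :=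
          (integral_map hXm hc.aestronglyMeasurable).symm
      _ = ∫ x, max (x - u) 0 ∂(m.map q) := by rw [hmap]
      _ = ∫ t, max (q t - u) 0 ∂m := integral_map hqmeas.aemeasurable hc.aestronglyMeasurable
  -- integrability of q on (0,1)
  have hqint : Integrable q m := by
    have h1 : Integrable (fun x : ℝ => x) ν := by
      rw [hνdef]
      exact (integrable_map_measure aestronglyMeasurable_id hXm).mpr hX
    rw [← hmap] at h1
    exact (integrable_map_measure aestronglyMeasurable_id hqmeas.aemeasurable).mp h1
  have hqint' : ∀ u : ℝ, Integrable (fun t => max (q t - u) 0) m :=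
    fun u => (hqint.sub (integrable_const u)).pos_part
  set c : ℝ := q p with hcdef
  -- splitting computation
  have hsplit : ∫ t in Ioo (0:ℝ) 1, max (q t - c) 0
      = (∫ t in Ioo p 1, q t) - (1 - p) * c := by
    have hunion : Ioc (0:ℝ) p ∪ Ioo p 1 = Ioo 0 1 := Ioc_union_Ioo_eq_Ioo hp0.le hp1
    have hdisj : Disjoint (Ioc (0:ℝ) p) (Ioo p 1) := by
      rw [disjoint_left]
      rintro t ⟨_, h2⟩ ⟨h3, _⟩
      exact absurd h2 (not_le.2 h3)
    have hion : IntegrableOn (fun t => max (q t - c) 0) (Ioo 0 1) volume := hqint' c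
    have hi1 : IntegrableOn (fun t => max (q t - c) 0) (Ioc 0 p) volume :=
      hion.mono_set (fun t ht => ⟨ht.1, ht.2.trans_lt hp1⟩)
    have hi2 : IntegrableOn (fun t => max (q t - c) 0) (Ioo p 1) volume :=
      hion.mono_set (fun t ht => ⟨hp0.trans ht.1, ht.2⟩)
    rw [← hunion, setIntegral_union hdisj measurableSet_Ioo hi1 hi2]
    have hz : ∫ t in Ioc (0:ℝ) p, max (q t - c) 0 = 0 := by
      rw [setIntegral_congr_fun measurableSet_Ioc
        (g := fun _ => (0:ℝ)) (fun t ht => max_eq_right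
          (sub_nonpos.2 (hqmono t p ht.1 ht.2 hp1)))]
      simp
    have hm2 : ∫ t in Ioo p 1, max (q t - c) 0 = ∫ t in Ioo p 1, (q t - c) :=
      setIntegral_congr_fun measurableSet_Ioo
        (fun t ht => max_eq_left (sub_nonneg.2 (hqmono p t hp0 ht.1.le ht.2)))
    have hiq : IntegrableOn q (Ioo p 1) volume :=
      IntegrableOn.mono_set (s := Ioo p 1) (t := Ioo 0 1) hqint
        (fun t ht => ⟨hp0.trans ht.1, ht.2⟩)
    rw [hz, hm2, zero_add, integral_sub hiq (integrableOn_const (lt_top_iff_ne_top.1 (by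
      rw [Real.volume_Ioo]; exact ENNReal.ofReal_lt_top)))]
    rw [setIntegral_const, measureReal_def, Real.volume_Ioo, smul_eq_mul,
      ENNReal.toReal_ofReal (by linarith)]
  constructor
  · rw [hg, hint, hsplit]
    field_simp
    ring
  · intro u
    rw [hg, hg, hint, hint]
    have hind : Integrable (fun t => (u - c) * (Ioo p 1).indicator (fun _ => (1:ℝ)) t) m := by
      refine Integrable.const_mul ?_ _
      rw [hmdef]
      refine (integrable_indicator_iff measurableSet_Ioo).2 ?_
      exact integrableOn_const (lt_top_iff_ne_top.1 (by
        rw [Measure.restrict_apply measurableSet_Ioo]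
        exact (measure_mono (inter_subset_right)).trans_lt
          (by rw [Real.volume_Ioo]; exact ENNReal.ofReal_lt_top)))
    have hkey : (∫ t in Ioo (0:ℝ) 1, max (q t - c) 0)
        ≤ (∫ t in Ioo (0:ℝ) 1, max (q t - u) 0) + (u - c) * (1 - p) := by
      have hle : (∫ t in Ioo (0:ℝ) 1, max (q t - c) 0)
          ≤ ∫ t in Ioo (0:ℝ) 1,
              (max (q t - u) 0 + (u - c) * (Ioo p 1).indicator (fun _ => (1:ℝ)) t) := by
        refine setIntegral_mono_on ((hqint' c) : _) (((hqint' u).add hind) : _)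
          measurableSet_Ioo ?_
        intro t ht
        by_cases hpt : t ∈ Ioo p 1
        · rw [indicator_of_mem hpt]
          have hqc : c ≤ q t := hqmono p t hp0 hpt.1.le ht.2
          have h1 : max (q t - c) 0 = q t - c := max_eq_left (by linarith)
          have h2 : q t - u ≤ max (q t - u) 0 := le_max_left _ _
          rw [h1]
          linarith
        · rw [indicator_of_notMem hpt]
          have htp : t ≤ p := by
            by_contra h
            exact hpt ⟨not_le.1 h, ht.2⟩
          have hqc : q t ≤ c := hqmono t p ht.1 htp hp1
          have h1 : max (q t - c) 0 = 0 := max_eq_right (by linarith)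
          rw [h1, mul_zero, add_zero]
          exact le_max_right _ _
      have heq : ∫ t in Ioo (0:ℝ) 1,
          (max (q t - u) 0 + (u - c) * (Ioo p 1).indicator (fun _ => (1:ℝ)) t)
          = (∫ t in Ioo (0:ℝ) 1, max (q t - u) 0) + (u - c) * (1 - p) := by
        rw [integral_add ((hqint' u) : _) hind]
        congr 1
        rw [integral_const_mul]
        congr 1
        rw [hmdef, setIntegral_indicator measurableSet_Ioo]
        have : Ioo (0:ℝ) 1 ∩ Ioo p 1 = Ioo p 1 :=
          inter_eq_right.2 (fun t ht => ⟨hp0.trans ht.1, ht.2⟩)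
        rw [this, setIntegral_const, measureReal_def, Real.volume_Ioo, smul_eq_mul,
          ENNReal.toReal_ofReal (by linarith), mul_one]
      rw [← heq]
      exact hle
    have hmul := mul_le_mul_of_nonneg_left hkey (le_of_lt (one_div_pos.2 h1p))
    have hcalc : (1 / (1 - p)) * ((u - c) * (1 - p)) = u - c := by
      field_simp
    rw [mul_add, hcalc] at hmul
    linarith
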